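/- Let p and r be distinct primes, let ζ = exp(2πi/(pr)) be a primitive pr-th root of unity in ℂ, and let c_0, …, c_{pr−1} ∈ {0,1}. If ∑_{j=0}^{pr−1} c_j ζ^j = 0, then ∑_{j=0}^{pr−1} c_j ζ^{rj} = 0 or ∑_{j=0}^{pr−1} c_j ζ^{pj} = 0 (note ζ^r is a primitive p-th root of unity and ζ^p is a primitive r-th root of unity). Equivalently, if the polynomial f(x) = ∑_{j=0}^{pr−1} c_j x^j with coefficients in {0,1} is divisible by Φ_{pr}(x), then it is divisible by Φ_p(x) or by Φ_r(x). -/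

import Mathlib

open Polynomial Finset
open Polynomial Finset

/-- powers depend only on exponent mod N -/
lemma pow_eq_of_modEq {x : ℂ} {N : ℕ} (hx : x ^ N = 1) {a b : ℕ} (hab : a ≡ b [MOD N]) :
    x ^ a = x ^ b := by
  have h1 : x ^ a = x ^ (a % N) := by
    conv_lhs => rw [← Nat.div_add_mod a N]
    rw [pow_add, pow_mul, hx, one_pow, one_mul]
  have h2 : x ^ b = x ^ (b % N) := by
    conv_lhs => rw [← Nat.div_add_mod b N]
    rw [pow_add, pow_mul, hx, one_pow, one_mul]
  rw [h1, h2, hab]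

/-- sum of all N-th powers of a nontrivial root of unity vanishes -/
lemma sum_pow_eq_zero {x : ℂ} {N : ℕ} (hx : x ^ N = 1) (hx1 : x ≠ 1) :
    ∑ k ∈ range N, x ^ k = 0 := by
  rw [geom_sum_eq hx1, hx, sub_self, zero_div]

/-- rational relation among powers of a primitive p-th root of unity, p prime,
has all coefficients equal -/
lemma coeffs_eq_of_prime_root {p : ℕ} (hp : p.Prime) {ω : ℂ} (hω : IsPrimitiveRoot ω p)
    (a : ℕ → ℚ) (h : ∑ i ∈ range p, (a i : ℂ) * ω ^ i = 0) :
    ∀ i < p, ∀ j < p, a i = a j := by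
  haveI : Fact p.Prime := ⟨hp⟩
  set P : ℚ[X] := ∑ i ∈ range p, C (a i) * X ^ i with hP
  have hcoeff : ∀ k < p, P.coeff k = a k := by
    intro k hk
    rw [hP, finset_sum_coeff]
    rw [Finset.sum_eq_single k]
    · simp
    · intro i _ hik; simp [coeff_C_mul, coeff_X_pow, hik, Ne.symm hik]
    · intro hk'; exact absurd (mem_range.mpr hk) hk'
  have hev : aeval ω P = 0 := by
    rw [hP]
    simp only [map_sum, map_mul, aeval_C, aeval_X_pow, eq_ratCast]
    exact h
  have hdvd : cyclotomic p ℚ ∣ P := by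
    rw [cyclotomic_eq_minpoly_rat hω hp.pos]
    exact minpoly.dvd ℚ ω hev
  obtain ⟨Q, hQ⟩ := hdvd
  have hcyc0 : (cyclotomic p ℚ) ≠ 0 := cyclotomic_ne_zero p ℚ
  have hdegP : P.degree < p := by
    apply lt_of_le_of_lt (degree_sum_le _ _)
    apply Finset.sup_lt_iff (by exact_mod_cast WithBot.bot_lt_coe p) |>.mpr
    intro i hi
    calc (C (a i) * X ^ i).degree ≤ (i : WithBot ℕ) := degree_C_mul_X_pow_le _ _
    _ < (p : WithBot ℕ) := by exact_mod_cast mem_range.mp hi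
  have hdegQ : Q.degree ≤ 0 := by
    by_cases hQ0 : Q = 0
    · simp [hQ0]
    · have : P.degree = (cyclotomic p ℚ).degree + Q.degree := by rw [hQ, degree_mul]
      rw [degree_cyclotomic, Nat.totient_prime hp] at this
      rw [this] at hdegP
      have hdq := Polynomial.degree_eq_natDegree hQ0
      rw [hdq] at hdegP ⊢
      norm_cast at hdegP ⊢
      omega
  have hQC : Q = C (Q.coeff 0) := eq_C_of_degree_le_zero hdegQ
  rw [hQC] at hQ
  have hPform : P = ∑ i ∈ range p, C (Q.coeff 0) * X ^ i := by
    rw [hQ, cyclotomic_prime, Finset.sum_mul]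
    exact Finset.sum_congr rfl fun i _ => mul_comm _ _
  have hcoeff2 : ∀ k < p, P.coeff k = Q.coeff 0 := by
    intro k hk
    rw [hPform, finset_sum_coeff, Finset.sum_eq_single k]
    · simp
    · intro i _ hik; simp [coeff_C_mul, coeff_X_pow, hik, Ne.symm hik]
    · intro hk'; exact absurd (mem_range.mpr hk) hk'
  intro i hi j hj
  rw [← hcoeff i hi, ← hcoeff j hj, hcoeff2 i hi, hcoeff2 j hj]

lemma crt_reindex (p r : ℕ) (hp : p.Prime) (hr : r.Prime) (hpr : p ≠ r) (F : ℕ → ℂ) :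
    ∑ j ∈ range (p * r), F j
      = ∑ a ∈ range p, ∑ b ∈ range r, F ((r * a + p * b) % (p * r)) := by
  haveI : Fact p.Prime := ⟨hp⟩
  haveI : Fact r.Prime := ⟨hr⟩
  have hcop : Nat.Coprime p r := (Nat.coprime_primes hp hr).mpr hpr
  have hprpos : 0 < p * r := Nat.mul_pos hp.pos hr.pos
  have hrp : (r : ZMod p) ≠ 0 := by
    intro h0
    rw [ZMod.natCast_eq_zero_iff] at h0
    exact hpr ((Nat.prime_dvd_prime_iff_eq hp hr).mp h0)
  have hpr' : (p : ZMod r) ≠ 0 := by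
    intro h0
    rw [ZMod.natCast_eq_zero_iff] at h0
    exact hpr.symm ((Nat.prime_dvd_prime_iff_eq hr hp).mp h0)
  have key : ∀ x y : ℕ, x < p * r → y < p * r →
      (x : ZMod p) = y → (x : ZMod r) = y → x = y := by
    intro x y hx hy h1 h2
    rw [ZMod.natCast_eq_natCast_iff] at h1 h2
    have := (Nat.modEq_and_modEq_iff_modEq_mul hcop).mp ⟨h1, h2⟩
    calc x = x % (p * r) := (Nat.mod_eq_of_lt hx).symm
    _ = y % (p * r) := this
    _ = y := Nat.mod_eq_of_lt hy
  have castp : ∀ a b : ℕ, (((r * a + p * b) % (p * r) : ℕ) : ZMod p) = r * a := by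
    intro a b
    have h1 : ((r * a + p * b) % (p * r)) ≡ r * a + p * b [MOD p] :=
      Nat.ModEq.of_mul_right r (Nat.mod_modEq _ _)
    rw [ZMod.natCast_eq_natCast_iff _ _ _ |>.mpr h1]
    push_cast
    simp
  have castr : ∀ a b : ℕ, (((r * a + p * b) % (p * r) : ℕ) : ZMod r) = p * b := by
    intro a b
    have h1 : ((r * a + p * b) % (p * r)) ≡ r * a + p * b [MOD r] :=
      Nat.ModEq.of_mul_left p (Nat.mod_modEq _ _)
    rw [ZMod.natCast_eq_natCast_iff _ _ _ |>.mpr h1]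
    push_cast
    simp
  have round : ∀ j, j < p * r →
      (r * ((j : ZMod p) * (r : ZMod p)⁻¹).val + p * ((j : ZMod r) * (p : ZMod r)⁻¹).val)
        % (p * r) = j := by
    intro j hj
    apply key _ _ (Nat.mod_lt _ hprpos) hj
    · rw [castp]
      simp only [ZMod.natCast_val, ZMod.cast_id]
      field_simp
    · rw [castr]
      simp only [ZMod.natCast_val, ZMod.cast_id]
      field_simp
  rw [← Finset.sum_product']
  refine Finset.sum_nbij' (i := fun j => ((((j : ZMod p) * (r : ZMod p)⁻¹).val),
      (((j : ZMod r) * (p : ZMod r)⁻¹).val)))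
    (j := fun ab => (r * ab.1 + p * ab.2) % (p * r)) ?_ ?_ ?_ ?_ ?_
  · intro j hj
    simp only [Finset.mem_product, Finset.mem_range]
    exact ⟨ZMod.val_lt _, ZMod.val_lt _⟩
  · intro ab hab
    exact Finset.mem_range.mpr (Nat.mod_lt _ hprpos)
  · intro j hj
    exact round j (Finset.mem_range.mp hj)
  · intro ab hab
    simp only [Finset.mem_product, Finset.mem_range] at hab
    have h1 : ((((r * ab.1 + p * ab.2) % (p * r) : ℕ) : ZMod p) * (r : ZMod p)⁻¹).val = ab.1 := by
      rw [castp, mul_comm (r : ZMod p), mul_assoc, mul_inv_cancel₀ hrp, mul_one,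
        ZMod.val_cast_of_lt hab.1]
    have h2 : ((((r * ab.1 + p * ab.2) % (p * r) : ℕ) : ZMod r) * (p : ZMod r)⁻¹).val = ab.2 := by
      rw [castr, mul_comm (p : ZMod r), mul_assoc, mul_inv_cancel₀ hpr', mul_one,
        ZMod.val_cast_of_lt hab.2]
    exact Prod.ext h1 h2
  · intro j hj
    rw [round j (Finset.mem_range.mp hj)]

theorem zero_one_poly_root_of_unity (p r : ℕ) (hp : p.Prime) (hr : r.Prime)
    (hpr : p ≠ r) (c : ℕ → ℂ) (hc : ∀ j, c j = 0 ∨ c j = 1)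
    (h : ∑ j ∈ Finset.range (p * r),
        c j * Complex.exp (2 * Real.pi * Complex.I / (p * r)) ^ j = 0) :
    (∑ j ∈ Finset.range (p * r),
        c j * Complex.exp (2 * Real.pi * Complex.I / (p * r)) ^ (r * j) = 0) ∨
    (∑ j ∈ Finset.range (p * r),
        c j * Complex.exp (2 * Real.pi * Complex.I / (p * r)) ^ (p * j) = 0) := by
  haveI : Fact p.Prime := ⟨hp⟩
  haveI : Fact r.Prime := ⟨hr⟩
  have hcop : Nat.Coprime p r := (Nat.coprime_primes hp hr).mpr hpr
  have hn0 : p * r ≠ 0 := Nat.mul_ne_zero hp.pos.ne' hr.pos.ne'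
  have hnpos : 0 < p * r := Nat.pos_of_ne_zero hn0
  set ζ : ℂ := Complex.exp (2 * Real.pi * Complex.I / (p * r)) with hζdef
  have hζ : IsPrimitiveRoot ζ (p * r) := by
    have := Complex.isPrimitiveRoot_exp (p * r) hn0
    rwa [Nat.cast_mul] at this
  have hζN : ζ ^ (p * r) = 1 := hζ.pow_eq_one
  -- rational coefficients
  set q : ℕ → ℚ := fun j => if c j = 1 then 1 else 0 with hqdef
  have hcq : ∀ j, c j = ((q j : ℚ) : ℂ) := by
    intro j
    rcases hc j with h0 | h1
    · simp [hqdef, h0]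
    · simp [hqdef, h1]
  have hq01 : ∀ j, q j = 0 ∨ q j = 1 := by
    intro j; by_cases hcj : c j = 1 <;> simp [hqdef, hcj]
  -- the polynomial
  set f : ℚ[X] := ∑ j ∈ range (p * r), C (q j) * X ^ j with hfdef
  have hfeval : ∀ x : ℂ, aeval x f = ∑ j ∈ range (p * r), ((q j : ℚ) : ℂ) * x ^ j := by
    intro x
    rw [hfdef]
    simp only [map_sum, map_mul, aeval_C, aeval_X_pow, eq_ratCast]
  have hfζ : aeval ζ f = 0 := by
    rw [hfeval, ← h]
    exact Finset.sum_congr rfl fun j _ => by rw [← hcq]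
  have hdvd : cyclotomic (p * r) ℚ ∣ f := by
    rw [cyclotomic_eq_minpoly_rat hζ hnpos]
    exact minpoly.dvd ℚ ζ hfζ
  -- vanishing at all primitive roots
  have hroot : ∀ t : ℕ, Nat.Coprime t (p * r) →
      ∑ j ∈ range (p * r), ((q j : ℚ) : ℂ) * ζ ^ (t * j) = 0 := by
    intro t ht
    have prim : IsPrimitiveRoot (ζ ^ t) (p * r) := hζ.pow_of_coprime t ht
    obtain ⟨g, hg⟩ := hdvd
    have hcz : aeval (ζ ^ t) (cyclotomic (p * r) ℚ) = 0 := by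
      rw [aeval_def, ← Polynomial.eval_map, map_cyclotomic]
      exact prim.isRoot_cyclotomic hnpos
    have : aeval (ζ ^ t) f = 0 := by rw [hg, map_mul, hcz, zero_mul]
    rw [hfeval] at this
    rw [← this]
    exact Finset.sum_congr rfl fun j _ => by rw [pow_mul]
  -- CRT set-up
  set ω : ℂ := ζ ^ r with hωdef
  set η : ℂ := ζ ^ p with hηdef
  have hω : IsPrimitiveRoot ω p := hζ.pow hnpos (mul_comm p r)
  have hη : IsPrimitiveRoot η r := hζ.pow hnpos rfl
  have hωp : ω ^ p = 1 := hω.pow_eq_one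
  have hηr : η ^ r = 1 := hη.pow_eq_one
  set m : ℕ → ℕ → ℚ := fun a b => q ((r * a + p * b) % (p * r)) with hmdef
  -- power computation
  have hpow : ∀ t a b : ℕ, ζ ^ (t * ((r * a + p * b) % (p * r)))
      = ω ^ (t * a) * η ^ (t * b) := by
    intro t a b
    have h1 : t * ((r * a + p * b) % (p * r)) ≡ t * (r * a + p * b) [MOD p * r] :=
      Nat.ModEq.mul_left t (Nat.mod_modEq _ _)
    rw [pow_eq_of_modEq hζN h1,
      show t * (r * a + p * b) = r * (t * a) + p * (t * b) by ring]
    show ζ ^ _ = (ζ ^ r) ^ (t * a) * (ζ ^ p) ^ (t * b)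
    rw [pow_add, pow_mul ζ r (t * a), pow_mul ζ p (t * b)]
  set S : ℕ → ℂ := fun b => ∑ a ∈ range p, ((m a b : ℚ) : ℂ) * ω ^ a with hSdef
  -- Step I: twisted relations
  have hES : ∀ s, 0 < s → s < r → ∑ b ∈ range r, S b * η ^ (s * b) = 0 := by
    intro s hs0 hsr
    obtain ⟨t, ht1, hts⟩ := Nat.chineseRemainder hcop 1 s
    have hctp : Nat.Coprime t p := by
      have hnd : ¬ p ∣ t := by
        intro hd
        obtain ⟨k, rfl⟩ := hd
        have h0 : p * k % p = 0 := Nat.mul_mod_right p k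
        have h1p : 1 % p = 1 := Nat.mod_eq_of_lt hp.one_lt
        have := ht1
        rw [Nat.ModEq] at this
        omega
      exact Nat.coprime_comm.mp (hp.coprime_iff_not_dvd.mpr hnd)
    have hctr : Nat.Coprime t r := by
      have hnd : ¬ r ∣ t := by
        intro hd
        obtain ⟨k, rfl⟩ := hd
        have h0 : r * k % r = 0 := Nat.mul_mod_right r k
        have hsp : s % r = s := Nat.mod_eq_of_lt hsr
        have := hts
        rw [Nat.ModEq] at this
        omega
      exact Nat.coprime_comm.mp (hr.coprime_iff_not_dvd.mpr hnd)
    have hct : Nat.Coprime t (p * r) := Nat.Coprime.mul_right hctp hctr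
    have h0 := hroot t hct
    rw [crt_reindex p r hp hr hpr (fun j => ((q j : ℚ) : ℂ) * ζ ^ (t * j))] at h0
    have hterm : ∀ a b : ℕ, ((q ((r * a + p * b) % (p * r)) : ℚ) : ℂ)
        * ζ ^ (t * ((r * a + p * b) % (p * r)))
        = ((m a b : ℚ) : ℂ) * ω ^ a * η ^ (s * b) := by
      intro a b
      rw [hpow t a b]
      have hωa : ω ^ (t * a) = ω ^ a := by
        refine pow_eq_of_modEq hωp ?_
        calc t * a ≡ 1 * a [MOD p] := Nat.ModEq.mul_right a ht1
        _ = a := one_mul a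
      have hηb : η ^ (t * b) = η ^ (s * b) := by
        exact pow_eq_of_modEq hηr (Nat.ModEq.mul_right b hts)
      rw [hωa, hηb, hmdef, mul_assoc]
    calc ∑ b ∈ range r, S b * η ^ (s * b)
        = ∑ b ∈ range r, ∑ a ∈ range p, ((m a b : ℚ) : ℂ) * ω ^ a * η ^ (s * b) := by
          refine Finset.sum_congr rfl fun b _ => ?_
          rw [hSdef, Finset.sum_mul]
    _ = ∑ a ∈ range p, ∑ b ∈ range r, ((m a b : ℚ) : ℂ) * ω ^ a * η ^ (s * b) :=
          Finset.sum_comm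
    _ = ∑ a ∈ range p, ∑ b ∈ range r, ((q ((r * a + p * b) % (p * r)) : ℚ) : ℂ)
          * ζ ^ (t * ((r * a + p * b) % (p * r))) := by
          refine Finset.sum_congr rfl fun a _ => Finset.sum_congr rfl fun b _ => ?_
          rw [hterm a b]
    _ = 0 := h0
  -- Step II: r * S b0 = total sum
  have hηne : ∀ k : ℕ, η ^ k ≠ 0 := fun k =>
    pow_ne_zero k (hη.ne_zero hr.pos.ne')
  have hsum : ∀ b0 < r, (r : ℂ) * S b0 = ∑ b ∈ range r, S b := by
    intro b0 hb0
    have H : ∑ s ∈ Finset.Ico 1 r, ((∑ b ∈ range r, S b * η ^ (s * b)) * (η ^ (s * b0))⁻¹)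
        = 0 := by
      refine Finset.sum_eq_zero fun s hs => ?_
      rw [Finset.mem_Ico] at hs
      rw [hES s hs.1 hs.2, zero_mul]
    have e1 : ∀ s : ℕ, (∑ b ∈ range r, S b * η ^ (s * b)) * (η ^ (s * b0))⁻¹
        = ∑ b ∈ range r, S b * (η ^ b * (η ^ b0)⁻¹) ^ s := by
      intro s
      rw [Finset.sum_mul]
      refine Finset.sum_congr rfl fun b _ => ?_
      rw [mul_assoc]
      congr 1
      rw [pow_mul' η s b, pow_mul' η s b0, mul_pow, inv_pow]
    have Hswap : ∑ b ∈ range r, S b * (∑ s ∈ Finset.Ico 1 r, (η ^ b * (η ^ b0)⁻¹) ^ s)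
        = 0 := by
      calc ∑ b ∈ range r, S b * (∑ s ∈ Finset.Ico 1 r, (η ^ b * (η ^ b0)⁻¹) ^ s)
          = ∑ b ∈ range r, ∑ s ∈ Finset.Ico 1 r, S b * (η ^ b * (η ^ b0)⁻¹) ^ s := by
            exact Finset.sum_congr rfl fun b _ => Finset.mul_sum _ _ _
      _ = ∑ s ∈ Finset.Ico 1 r, ∑ b ∈ range r, S b * (η ^ b * (η ^ b0)⁻¹) ^ s :=
            Finset.sum_comm
      _ = ∑ s ∈ Finset.Ico 1 r, (∑ b ∈ range r, S b * η ^ (s * b)) * (η ^ (s * b0))⁻¹ :=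
            Finset.sum_congr rfl fun s _ => (e1 s).symm
      _ = 0 := H
    have hinner : ∀ b < r, (∑ s ∈ Finset.Ico 1 r, (η ^ b * (η ^ b0)⁻¹) ^ s)
        = (if b = b0 then (r : ℂ) else 0) - 1 := by
      intro b hb
      set y : ℂ := η ^ b * (η ^ b0)⁻¹ with hydef
      have hpowr : ∀ k : ℕ, (η ^ k) ^ r = 1 := by
        intro k
        rw [← pow_mul, mul_comm, pow_mul, hηr, one_pow]
      have hyr : y ^ r = 1 := by
        rw [hydef, mul_pow, inv_pow, hpowr, hpowr, inv_one, mul_one]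
      have hsplit : ∑ s ∈ range r, y ^ s = 1 + ∑ s ∈ Finset.Ico 1 r, y ^ s := by
        rw [Finset.range_eq_Ico, Finset.sum_eq_sum_Ico_succ_bot hr.pos, pow_zero]
      by_cases hbb : b = b0
      · have hy1 : y = 1 := by
          rw [hydef, hbb, mul_inv_cancel₀ (hηne b0)]
        rw [if_pos hbb]
        have hsum1 : ∑ s ∈ range r, y ^ s = (r : ℂ) := by
          rw [hy1]; simp
        linear_combination hsum1 - hsplit
      · have hy1 : y ≠ 1 := by
          intro hy
          apply hbb
          refine hη.pow_inj hb hb0 ?_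
          rw [hydef] at hy
          exact (mul_inv_eq_one₀ (hηne b0)).mp hy
        have hz := sum_pow_eq_zero hyr hy1
        rw [if_neg hbb]
        linear_combination hz - hsplit
    have Hfin : ∑ b ∈ range r, S b * ((if b = b0 then (r : ℂ) else 0) - 1) = 0 := by
      have e2 : ∑ b ∈ range r, S b * ((if b = b0 then (r : ℂ) else 0) - 1)
          = ∑ b ∈ range r, S b * (∑ s ∈ Finset.Ico 1 r, (η ^ b * (η ^ b0)⁻¹) ^ s) :=
        Finset.sum_congr rfl fun b hb => by rw [hinner b (Finset.mem_range.mp hb)]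
      rw [e2, Hswap]
    have expand : ∑ b ∈ range r, S b * ((if b = b0 then (r : ℂ) else 0) - 1)
        = (r : ℂ) * S b0 - ∑ b ∈ range r, S b := by
      calc ∑ b ∈ range r, S b * ((if b = b0 then (r : ℂ) else 0) - 1)
          = ∑ b ∈ range r, ((if b = b0 then S b * (r : ℂ) else 0) - S b) := by
            refine Finset.sum_congr rfl fun b _ => ?_
            by_cases hbb : b = b0 <;> simp [hbb] <;> ring
      _ = (∑ b ∈ range r, if b = b0 then S b * (r : ℂ) else 0) - ∑ b ∈ range r, S b :=
            Finset.sum_sub_distrib _ _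
      _ = S b0 * (r : ℂ) - ∑ b ∈ range r, S b := by
            rw [Finset.sum_ite_eq' (range r) b0 (fun b => S b * (r : ℂ)),
              if_pos (Finset.mem_range.mpr hb0)]
      _ = (r : ℂ) * S b0 - ∑ b ∈ range r, S b := by ring
    rw [expand] at Hfin
    linear_combination Hfin
  -- S values all equal
  have hrC : (r : ℂ) ≠ 0 := Nat.cast_ne_zero.mpr hr.pos.ne'
  have hSeq : ∀ b < r, ∀ b' < r, S b = S b' := by
    intro b hb b' hb'
    exact mul_left_cancel₀ hrC ((hsum b hb).trans (hsum b' hb').symm)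
  have hm01 : ∀ a b : ℕ, m a b = 0 ∨ m a b = 1 := fun a b => hq01 _
  -- constancy of coefficient differences
  have hconst : ∀ b < r, ∀ b' < r, ∀ a < p, ∀ a' < p,
      m a b - m a b' = m a' b - m a' b' := by
    intro b hb b' hb'
    have hz : ∑ a ∈ range p, (((m a b - m a b' : ℚ)) : ℂ) * ω ^ a = 0 := by
      have e : ∑ a ∈ range p, (((m a b - m a b' : ℚ)) : ℂ) * ω ^ a = S b - S b' := by
        rw [hSdef, ← Finset.sum_sub_distrib]
        refine Finset.sum_congr rfl fun a _ => ?_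
        push_cast
        ring
      rw [e, hSeq b hb b' hb', sub_self]
    exact fun a ha a' ha' => coeffs_eq_of_prime_root hp hω _ hz a ha a' ha'
  -- primitive roots for the targets
  have hω2 : IsPrimitiveRoot (ω ^ r) p := hω.pow_of_coprime r hcop.symm
  have hη2 : IsPrimitiveRoot (η ^ p) r := hη.pow_of_coprime p hcop
  have sumω2 : ∑ a ∈ range p, (ω ^ r) ^ a = 0 :=
    sum_pow_eq_zero hω2.pow_eq_one (hω2.ne_one hp.one_lt)
  have sumη2 : ∑ b ∈ range r, (η ^ p) ^ b = 0 :=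
    sum_pow_eq_zero hη2.pow_eq_one (hη2.ne_one hr.one_lt)
  -- rewriting the two target sums
  have targL : ∑ j ∈ range (p * r), c j * ζ ^ (r * j)
      = ∑ a ∈ range p, ∑ b ∈ range r, ((m a b : ℚ) : ℂ) * (ω ^ r) ^ a := by
    rw [crt_reindex p r hp hr hpr (fun j => c j * ζ ^ (r * j))]
    refine Finset.sum_congr rfl fun a _ => Finset.sum_congr rfl fun b _ => ?_
    rw [hcq, hpow r a b]
    have h1 : η ^ (r * b) = 1 := by rw [pow_mul, hηr, one_pow]
    rw [h1, mul_one, pow_mul]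
  have targR : ∑ j ∈ range (p * r), c j * ζ ^ (p * j)
      = ∑ a ∈ range p, ∑ b ∈ range r, ((m a b : ℚ) : ℂ) * (η ^ p) ^ b := by
    rw [crt_reindex p r hp hr hpr (fun j => c j * ζ ^ (p * j))]
    refine Finset.sum_congr rfl fun a _ => Finset.sum_congr rfl fun b _ => ?_
    rw [hcq, hpow p a b]
    have h1 : ω ^ (p * a) = 1 := by rw [pow_mul, hωp, one_pow]
    rw [h1, one_mul, pow_mul]
  by_cases hcase : ∀ b < r, ∀ a < p, m a b = m a 0
  · right
    rw [targR]
    refine Finset.sum_eq_zero fun a ha => ?_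
    calc ∑ b ∈ range r, ((m a b : ℚ) : ℂ) * (η ^ p) ^ b
        = ∑ b ∈ range r, ((m a 0 : ℚ) : ℂ) * (η ^ p) ^ b :=
          Finset.sum_congr rfl fun b hb => by
            rw [hcase b (Finset.mem_range.mp hb) a (Finset.mem_range.mp ha)]
    _ = ((m a 0 : ℚ) : ℂ) * ∑ b ∈ range r, (η ^ p) ^ b := (Finset.mul_sum _ _ _).symm
    _ = 0 := by rw [sumη2, mul_zero]
  · left
    push_neg at hcase
    obtain ⟨b1, hb1, a1, ha1, hne⟩ := hcase
    have hdiff : ∀ a < p, m a b1 - m a 0 = m a1 b1 - m a1 0 :=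
      fun a ha => hconst b1 hb1 0 hr.pos a ha a1 ha1
    have hb1S : S b1 = 0 ∨ S 0 = 0 := by
      rcases hm01 a1 b1 with h1 | h1 <;> rcases hm01 a1 0 with h2 | h2
      · exact absurd (h1.trans h2.symm) hne
      · -- m a1 b1 = 0, m a1 0 = 1 : column b1 vanishes
        left
        refine Finset.sum_eq_zero fun a ha => ?_
        have hd := hdiff a (Finset.mem_range.mp ha)
        rw [h1, h2] at hd
        rcases hm01 a b1 with h3 | h3
        · rw [h3]; simp
        · exfalso
          rcases hm01 a 0 with h4 | h4 <;> rw [h3, h4] at hd <;> norm_num at hd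
      · -- m a1 b1 = 1, m a1 0 = 0 : column 0 vanishes
        right
        refine Finset.sum_eq_zero fun a ha => ?_
        have hd := hdiff a (Finset.mem_range.mp ha)
        rw [h1, h2] at hd
        rcases hm01 a 0 with h3 | h3
        · rw [h3]; simp
        · exfalso
          rcases hm01 a b1 with h4 | h4 <;> rw [h3, h4] at hd <;> norm_num at hd
      · exact absurd (h1.trans h2.symm) hne
    have hallS : ∀ b < r, S b = 0 := by
      intro b hb
      rcases hb1S with h0 | h0
      · exact (hSeq b hb b1 hb1).trans h0
      · exact (hSeq b hb 0 hr.pos).trans h0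
    have hcol : ∀ b < r, ∀ a < p, m a b = m 0 b := by
      intro b hb a ha
      exact coeffs_eq_of_prime_root hp hω (fun a => m a b) (hallS b hb) a ha 0 hp.pos
    rw [targL, Finset.sum_comm]
    refine Finset.sum_eq_zero fun b hb => ?_
    calc ∑ a ∈ range p, ((m a b : ℚ) : ℂ) * (ω ^ r) ^ a
        = ∑ a ∈ range p, ((m 0 b : ℚ) : ℂ) * (ω ^ r) ^ a :=
          Finset.sum_congr rfl fun a ha => by
            rw [hcol b (Finset.mem_range.mp hb) a (Finset.mem_range.mp ha)]
    _ = ((m 0 b : ℚ) : ℂ) * ∑ a ∈ range p, (ω ^ r) ^ a := (Finset.mul_sum _ _ _).symm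
    _ = 0 := by rw [sumω2, mul_zero]
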